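/- For every s ∈ ℝ, (1/2)·ς²·φ''(s) + ((μ − b·s)/(1−p))·φ'(s) − α·θ(s)²·φ(s) = −λ·φ(s). -/

import Mathlib

/-- Ornstein–Uhlenbeck complete-market model: the pair `(λ, φ)` with
`λ = b(√(1-p)-1)/(2(1-p))` and `φ(s) = exp(-(1/2)A s² - B s)` is an eigenpair of the
operator `Lφ = (1/2)ς²φ'' + ((μ - b s)/(1-p))φ' - α θ(s)² φ`, i.e.
`(1/2)ς²φ''(s) + ((μ - b s)/(1-p))φ'(s) - α θ(s)² φ(s) = -λ φ(s)` for all `s`. -/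
theorem stmt1 (μ b ς p : ℝ) (hb : 0 < b) (hς : 0 < ς) (hp : p < 0)
    (α : ℝ) (hα : α = -p / (2 * (1 - p) ^ 2))
    (θ : ℝ → ℝ) (hθ : ∀ s, θ s = (μ - b * s) / ς)
    (A B lam : ℝ)
    (hA : A = b * (Real.sqrt (1 - p) - 1) / ((1 - p) * ς ^ 2))
    (hB : B = -μ * (Real.sqrt (1 - p) - 1) / ((1 - p) * ς ^ 2))
    (hlam : lam = b * (Real.sqrt (1 - p) - 1) / (2 * (1 - p)))
    (φ : ℝ → ℝ) (hφ : ∀ s, φ s = Real.exp (-(1 / 2) * A * s ^ 2 - B * s)) :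
    ∀ s, (1 / 2) * ς ^ 2 * deriv (deriv φ) s + ((μ - b * s) / (1 - p)) * deriv φ s
        - α * (θ s) ^ 2 * φ s = -lam * φ s := by
  have hφfun : φ = fun s => Real.exp (-(1 / 2) * A * s ^ 2 - B * s) := funext hφ
  have hder : ∀ s, HasDerivAt φ ((-(A * s) - B) * φ s) s := by
    intro s
    have h1 : HasDerivAt (fun s : ℝ => -(1 / 2) * A * s ^ 2 - B * s)
        (-(A * s) - B) s := by
      have hx : HasDerivAt (fun s : ℝ => s) 1 s := hasDerivAt_id s
      have hsq : HasDerivAt (fun s : ℝ => s ^ 2) (2 * s) s := by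
        simpa using hasDerivAt_pow 2 s
      have := ((hsq.const_mul (-(1 / 2) * A)).sub (hx.const_mul B))
      exact this.congr_deriv (by ring)
    have := h1.exp
    rw [hφ s]
    convert this using 1
    ring
  have hderiv : deriv φ = fun s => (-(A * s) - B) * φ s :=
    funext fun s => (hder s).deriv
  intro s
  have hder2 : HasDerivAt (deriv φ)
      ((-A) * φ s + (-(A * s) - B) * ((-(A * s) - B) * φ s)) s := by
    rw [hderiv]
    have hlin : HasDerivAt (fun s : ℝ => -(A * s) - B) (-A) s := by
      have hx : HasDerivAt (fun s : ℝ => s) 1 s := hasDerivAt_id s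
      have := (hx.const_mul A).neg.sub_const B
      simpa using this
    exact hlin.mul (hder s)
  rw [hder2.deriv, hderiv]
  have hφs := hφ s
  have hθs := hθ s
  -- reduce to a coefficient identity
  have hq : Real.sqrt (1 - p) ^ 2 = 1 - p := Real.sq_sqrt (by linarith)
  have h1p : (1 - p) ≠ 0 := by nlinarith
  have hςne : ς ≠ 0 := ne_of_gt hς
  have key : (1 / 2) * ς ^ 2 * ((-A) + (-(A * s) - B) ^ 2)
      + ((μ - b * s) / (1 - p)) * (-(A * s) - B)
      - α * ((μ - b * s) / ς) ^ 2 = -lam := by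
    subst hA hB hα hlam
    generalize hqdef : Real.sqrt (1 - p) = q at hq ⊢
    have hqne : q ≠ 0 := fun h => h1p (by rw [← hq, h]; ring)
    have hp2 : p = 1 - q ^ 2 := by linarith
    subst hp2
    field_simp
    ring
  calc (1 / 2) * ς ^ 2 * ((-A) * φ s + (-(A * s) - B) * ((-(A * s) - B) * φ s))
        + ((μ - b * s) / (1 - p)) * ((-(A * s) - B) * φ s) - α * (θ s) ^ 2 * φ s
      = ((1 / 2) * ς ^ 2 * ((-A) + (-(A * s) - B) ^ 2)
        + ((μ - b * s) / (1 - p)) * (-(A * s) - B)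
        - α * ((μ - b * s) / ς) ^ 2) * φ s := by rw [hθs]; ring
    _ = -lam * φ s := by rw [key]
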